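/- Let σ > 0 and let h(x) := (2πσ²)⁻¹ exp(−‖x‖²/(2σ²)) be the Gaussian kernel on ℝ². Let N ≥ 1, 0 < R₁ < … < R_N, and s ∈ {−1,1}^N. Define A := { p ∈ L²(ℝ²) : for every i, ∫_{B(0,R_i)} (h⋆p)(x) dx = s_i · 2πR_i and (h⋆p)(x) = s_i/R_i for every x with ‖x‖ = R_i }. If A is nonempty, then A contains a unique element p_v of minimal L²-norm, and p_v is radial: p_v ∘ Q = p_v almost everywhere for every rotation Q of ℝ². -/

import Mathlib

open MeasureTheory Set

noncomputable section

abbrev Plane : Type := EuclideanSpace ℝ (Fin 2)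

abbrev L2 : Type := Lp ℝ 2 (volume : Measure Plane)

/-- The Gaussian kernel with standard deviation `σ` on the plane. -/
def gauss (σ : ℝ) (x : Plane) : ℝ :=
  (2 * Real.pi * σ ^ 2)⁻¹ * Real.exp (-‖x‖ ^ 2 / (2 * σ ^ 2))

/-- Convolution of the Gaussian kernel with `p ∈ L²(ℝ²)`. -/
def gconv (σ : ℝ) (p : L2) (x : Plane) : ℝ := ∫ y, gauss σ (x - y) * p y

/-- A rotation of the plane: a linear isometry with determinant one. -/
def IsRotation (R : Plane ≃ₗᵢ[ℝ] Plane) : Prop :=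
  LinearMap.det (R.toLinearEquiv : Plane →ₗ[ℝ] Plane) = 1

/-- The admissible set `A` of the vanishing derivatives pre-certificate problem. -/
def certSet (σ : ℝ) (N : ℕ) (R : Fin N → ℝ) (s : Fin N → ℝ) : Set L2 :=
  { p | ∀ i : Fin N,
      (∫ x in Metric.ball (0 : Plane) (R i), gconv σ p x) = s i * (2 * Real.pi * R i) ∧
      ∀ x : Plane, ‖x‖ = R i → gconv σ p x = s i / R i }

lemma continuous_gauss (σ : ℝ) : Continuous (gauss σ) := by
  unfold gauss; fun_prop

lemma integrable_exp_neg_mul_sq_norm {b : ℝ} (hb : 0 < b) :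
    Integrable (fun v : Plane => Real.exp (-b * ‖v‖ ^ 2)) := by
  have h := (GaussianFourier.integrable_cexp_neg_mul_sq_norm_add (V := Plane) (b := (b : ℂ))
    (by simpa using hb) 0 0).norm
  refine h.congr (Filter.Eventually.of_forall fun v => ?_)
  show ‖Complex.exp _‖ = _
  rw [Complex.norm_exp]
  congr 1
  have : ((-b : ℂ) * (‖v‖ : ℂ) ^ 2 + 0 * ((inner ℝ (0 : Plane) v : ℝ) : ℂ))
      = ((-b * ‖v‖ ^ 2 : ℝ) : ℂ) := by push_cast; ring
  rw [this, Complex.ofReal_re]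

lemma memℒp_gauss {σ : ℝ} (hσ : 0 < σ) : MemLp (gauss σ) 2 (volume : Measure Plane) := by
  have hmeas : AEStronglyMeasurable (gauss σ) volume :=
    (continuous_gauss σ).aestronglyMeasurable
  rw [memLp_two_iff_integrable_sq hmeas]
  have h : (fun x : Plane => gauss σ x ^ 2) =
      fun x => ((2 * Real.pi * σ ^ 2)⁻¹) ^ 2 * Real.exp (-(σ ^ 2)⁻¹ * ‖x‖ ^ 2) := by
    ext x
    rw [gauss, mul_pow, sq (Real.exp _), ← Real.exp_add]
    congr 2
    field_simp
    ring
  rw [h]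
  exact (integrable_exp_neg_mul_sq_norm (by positivity)).const_mul _

lemma mp_sub_left (x : Plane) :
    MeasurePreserving (fun y : Plane => x - y) volume volume := by
  have h := (measurePreserving_add_left (volume : Measure Plane) x).comp
    (Measure.measurePreserving_neg (volume : Measure Plane))
  simpa [Function.comp_def, sub_eq_add_neg] using h

lemma memℒp_gauss_shift {σ : ℝ} (hσ : 0 < σ) (x : Plane) :
    MemLp (fun y : Plane => gauss σ (x - y)) 2 (volume : Measure Plane) :=
  (memℒp_gauss hσ).comp_measurePreserving (mp_sub_left x)

def gK {σ : ℝ} (hσ : 0 < σ) (x : Plane) : L2 := (memℒp_gauss_shift hσ x).toLp _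

lemma gK_coe {σ : ℝ} (hσ : 0 < σ) (x : Plane) :
    gK hσ x =ᵐ[volume] fun y => gauss σ (x - y) := MemLp.coeFn_toLp _

lemma gconv_eq_inner {σ : ℝ} (hσ : 0 < σ) (p : L2) (x : Plane) :
    gconv σ p x = inner (𝕜 := ℝ) (gK hσ x) p := by
  rw [L2.inner_def, gconv]
  refine integral_congr_ae ?_
  filter_upwards [gK_coe hσ x] with y hy
  rw [hy]
  simp [RCLike.inner_apply]
  ring

def gC {σ : ℝ} (hσ : 0 < σ) : ℝ := ‖(memℒp_gauss hσ).toLp (gauss σ)‖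

set_option maxHeartbeats 1000000 in
lemma norm_gK {σ : ℝ} (hσ : 0 < σ) (x : Plane) : ‖gK hσ x‖ = gC hσ := by
  have h1 : ‖gK hσ x‖ = (eLpNorm (fun y : Plane => gauss σ (x - y)) 2 volume).toReal :=
    Lp.norm_toLp (fun y : Plane => gauss σ (x - y)) (memℒp_gauss_shift hσ x)
  have h2 : gC hσ = (eLpNorm (gauss σ) 2 (volume : Measure Plane)).toReal :=
    Lp.norm_toLp (gauss σ) (memℒp_gauss hσ)
  rw [h1, h2]
  congr 1
  exact eLpNorm_comp_measurePreserving (memℒp_gauss hσ).aestronglyMeasurable (mp_sub_left x)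

lemma gconv_bound {σ : ℝ} (hσ : 0 < σ) (p : L2) (x : Plane) :
    |gconv σ p x| ≤ gC hσ * ‖p‖ := by
  rw [gconv_eq_inner hσ]
  calc |inner (𝕜 := ℝ) (gK hσ x) p| ≤ ‖gK hσ x‖ * ‖p‖ := abs_real_inner_le_norm _ _
  _ = gC hσ * ‖p‖ := by rw [norm_gK]

lemma stronglyMeasurable_gconv (σ : ℝ) (p : L2) :
    StronglyMeasurable (fun x : Plane => gconv σ p x) := by
  apply StronglyMeasurable.integral_prod_right'
    (f := fun z : Plane × Plane => gauss σ (z.1 - z.2) * p z.2)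
  exact (((continuous_gauss σ).comp (continuous_fst.sub continuous_snd)).stronglyMeasurable).mul
    ((Lp.stronglyMeasurable p).comp_measurable measurable_snd)

lemma integrableOn_gconv_ball {σ : ℝ} (hσ : 0 < σ) (p : L2) (r : ℝ) :
    IntegrableOn (fun x => gconv σ p x) (Metric.ball (0 : Plane) r) volume := by
  refine Integrable.mono' (g := fun _ => gC hσ * ‖p‖)
    (integrableOn_const measure_ball_lt_top.ne)
    (stronglyMeasurable_gconv σ p).aestronglyMeasurable ?_
  exact Filter.Eventually.of_forall fun x => by
    simpa [Real.norm_eq_abs] using gconv_bound hσ p x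

lemma continuous_gconv_pt {σ : ℝ} (hσ : 0 < σ) (x : Plane) :
    Continuous fun p : L2 => gconv σ p x := by
  simp only [gconv_eq_inner hσ]
  exact Continuous.inner continuous_const continuous_id

lemma continuous_gconv_ball {σ : ℝ} (hσ : 0 < σ) (r : ℝ) :
    Continuous fun p : L2 => ∫ x in Metric.ball (0 : Plane) r, gconv σ p x := by
  set C : ℝ := gC hσ * (volume (Metric.ball (0 : Plane) r)).toReal with hCdef
  have hgC0 : 0 ≤ gC hσ := norm_nonneg _
  have hC0 : 0 ≤ C := mul_nonneg hgC0 ENNReal.toReal_nonneg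
  have hlip : ∀ p q : L2,
      dist (∫ x in Metric.ball (0 : Plane) r, gconv σ p x)
        (∫ x in Metric.ball (0 : Plane) r, gconv σ q x) ≤ C * dist p q := by
    intro p q
    rw [dist_eq_norm, dist_eq_norm,
      ← integral_sub (integrableOn_gconv_ball hσ p r) (integrableOn_gconv_ball hσ q r)]
    have hbound : ∀ x ∈ Metric.ball (0 : Plane) r,
        ‖gconv σ p x - gconv σ q x‖ ≤ gC hσ * ‖p - q‖ := by
      intro x _
      have : gconv σ p x - gconv σ q x = gconv σ (p - q) x := by
        simp [gconv_eq_inner hσ, inner_sub_right]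
      rw [this, Real.norm_eq_abs]
      exact gconv_bound hσ (p - q) x
    calc ‖∫ x in Metric.ball (0 : Plane) r, (gconv σ p x - gconv σ q x)‖
        ≤ gC hσ * ‖p - q‖ * (volume (Metric.ball (0 : Plane) r)).toReal :=
          norm_setIntegral_le_of_norm_le_const measure_ball_lt_top hbound
      _ = C * ‖p - q‖ := by ring
  have : LipschitzWith C.toNNReal fun p : L2 =>
      ∫ x in Metric.ball (0 : Plane) r, gconv σ p x := by
    refine LipschitzWith.of_dist_le_mul fun p q => ?_
    calc dist _ _ ≤ C * dist p q := hlip p q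
      _ = (C.toNNReal : ℝ) * dist p q := by rw [Real.coe_toNNReal C hC0]
  exact this.continuous

lemma isClosed_certSet {σ : ℝ} (hσ : 0 < σ) (N : ℕ) (R : Fin N → ℝ) (s : Fin N → ℝ) :
    IsClosed (certSet σ N R s) := by
  have hrw : certSet σ N R s = ⋂ i : Fin N,
      ({p : L2 | (∫ x in Metric.ball (0 : Plane) (R i), gconv σ p x)
          = s i * (2 * Real.pi * R i)} ∩
        ⋂ x : {x : Plane // ‖x‖ = R i}, {p : L2 | gconv σ p (x : Plane) = s i / R i}) := by
    ext p
    simp only [certSet, Set.mem_setOf_eq, Set.mem_iInter, Set.mem_inter_iff, Subtype.forall]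
  rw [hrw]
  refine isClosed_iInter fun i => (isClosed_eq (continuous_gconv_ball hσ _) continuous_const).inter
    (isClosed_iInter fun x => isClosed_eq (continuous_gconv_pt hσ _) continuous_const)

lemma convex_certSet {σ : ℝ} (hσ : 0 < σ) (N : ℕ) (R : Fin N → ℝ) (s : Fin N → ℝ) :
    Convex ℝ (certSet σ N R s) := by
  intro p hp q hq a b ha hb hab
  intro i
  obtain ⟨hp1, hp2⟩ := hp i
  obtain ⟨hq1, hq2⟩ := hq i
  have hx : ∀ x : Plane, gconv σ (a • p + b • q) x = a * gconv σ p x + b * gconv σ q x := by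
    intro x
    simp [gconv_eq_inner hσ, inner_add_right, inner_smul_right]
  constructor
  · have : (∫ x in Metric.ball (0 : Plane) (R i), gconv σ (a • p + b • q) x)
        = a * (∫ x in Metric.ball (0 : Plane) (R i), gconv σ p x)
          + b * (∫ x in Metric.ball (0 : Plane) (R i), gconv σ q x) := by
      simp_rw [hx]
      rw [integral_add ((integrableOn_gconv_ball hσ p _).const_mul a)
        ((integrableOn_gconv_ball hσ q _).const_mul b), integral_const_mul, integral_const_mul]
    rw [this, hp1, hq1]
    linear_combination (s i * (2 * Real.pi * R i)) * hab
  · intro x hxn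
    rw [hx, hp2 x hxn, hq2 x hxn]
    linear_combination (s i / R i) * hab

theorem stmt15 (σ : ℝ) (hσ : 0 < σ) (N : ℕ) (hN : 1 ≤ N)
    (R : Fin N → ℝ) (hR0 : ∀ i, 0 < R i) (hR : StrictMono R)
    (s : Fin N → ℝ) (hs : ∀ i, s i = 1 ∨ s i = -1)
    (hA : (certSet σ N R s).Nonempty) :
    (∃! p : L2, p ∈ certSet σ N R s ∧ ∀ q ∈ certSet σ N R s, ‖p‖ ≤ ‖q‖) ∧
    (∀ p : L2, (p ∈ certSet σ N R s ∧ ∀ q ∈ certSet σ N R s, ‖p‖ ≤ ‖q‖) →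
      ∀ Q : Plane ≃ₗᵢ[ℝ] Plane, IsRotation Q → (fun x => p (Q x)) =ᵐ[volume] ⇑p) := by
  set K := certSet σ N R s with hK
  have hconv : Convex ℝ K := convex_certSet hσ N R s
  have hclosed : IsClosed K := isClosed_certSet hσ N R s
  -- existence of a minimizer
  obtain ⟨v, hvK, hv⟩ :=
    exists_norm_eq_iInf_of_complete_convex hA hclosed.isComplete hconv (0 : L2)
  have hbdd : BddBelow (Set.range fun w : K => ‖(0 : L2) - (w : L2)‖) := by
    refine ⟨0, ?_⟩
    rintro y ⟨w, rfl⟩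
    positivity
  have hvmin : ∀ q ∈ K, ‖v‖ ≤ ‖q‖ := by
    intro q hq
    have h1 : (⨅ w : K, ‖(0 : L2) - (w : L2)‖) ≤ ‖(0 : L2) - q‖ := ciInf_le hbdd ⟨q, hq⟩
    rw [← hv] at h1
    simpa [norm_neg] using h1
  have huniq : ∀ w : L2, (w ∈ K ∧ ∀ q ∈ K, ‖w‖ ≤ ‖q‖) → w = v := by
    rintro w ⟨hwK, hwmin⟩
    have h1 : ‖w‖ = ‖v‖ := le_antisymm (hwmin v hvK) (hvmin w hwK)
    have hmidK : (1 / 2 : ℝ) • w + (1 / 2 : ℝ) • v ∈ K :=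
      hconv hwK hvK (by norm_num) (by norm_num) (by norm_num)
    have hm : ‖v‖ ≤ ‖(1 / 2 : ℝ) • w + (1 / 2 : ℝ) • v‖ := hvmin _ hmidK
    have hsmul : (1 / 2 : ℝ) • w + (1 / 2 : ℝ) • v = (1 / 2 : ℝ) • (w + v) := by
      rw [smul_add]
    have hnorm : ‖(1 / 2 : ℝ) • (w + v)‖ = (1 / 2) * ‖w + v‖ := by
      rw [norm_smul]
      norm_num
    have h2 : 2 * ‖v‖ ≤ ‖w + v‖ := by
      rw [hsmul, hnorm] at hm
      linarith
    have hpar := parallelogram_law_with_norm ℝ w v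
    have h3 : ‖w - v‖ * ‖w - v‖ ≤ 0 := by nlinarith [norm_nonneg (w + v), norm_nonneg v]
    have h4 : ‖w - v‖ = 0 := le_antisymm (by nlinarith [norm_nonneg (w - v)]) (norm_nonneg _)
    rwa [norm_sub_eq_zero_iff] at h4
  have hEU : ∃! p : L2, p ∈ K ∧ ∀ q ∈ K, ‖p‖ ≤ ‖q‖ := ⟨v, ⟨hvK, hvmin⟩, huniq⟩
  refine ⟨hEU, ?_⟩
  -- rotation invariance
  rintro p ⟨hpK, hpmin⟩ Q _hQ
  have hQmp : MeasurePreserving (⇑Q) (volume : Measure Plane) volume := Q.measurePreserving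
  have hQemb : MeasurableEmbedding (⇑Q) := Q.toHomeomorph.measurableEmbedding
  set q : L2 := Lp.compMeasurePreserving (⇑Q) hQmp p with hqdef
  have hqcoe : ⇑q =ᵐ[volume] ⇑p ∘ ⇑Q := Lp.coeFn_compMeasurePreserving p hQmp
  have hqnorm : ‖q‖ = ‖p‖ := Lp.norm_compMeasurePreserving p hQmp
  have hgaussQ : ∀ x y : Plane, gauss σ (x - y) = gauss σ (Q x - Q y) := by
    intro x y
    unfold gauss
    rw [show Q x - Q y = Q (x - y) by rw [map_sub], Q.norm_map]
  have hkey : ∀ x : Plane, gconv σ q x = gconv σ p (Q x) := by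
    intro x
    have h1 : gconv σ q x = ∫ y, gauss σ (x - y) * p (Q y) := by
      refine integral_congr_ae ?_
      filter_upwards [hqcoe] with y hy
      rw [hy]
      rfl
    have h2 : (∫ y, gauss σ (x - y) * p (Q y))
        = ∫ y, (fun z => gauss σ (Q x - z) * p z) (Q y) := by
      congr 1
      ext y
      rw [hgaussQ x y]
    rw [h1, h2]
    exact hQmp.integral_comp hQemb (fun z => gauss σ (Q x - z) * p z)
  have hqK : q ∈ K := by
    intro i
    obtain ⟨hp1, hp2⟩ := hpK i
    constructor
    · have hb1 : (∫ x in Metric.ball (0 : Plane) (R i), gconv σ q x)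
          = ∫ x in Metric.ball (0 : Plane) (R i), gconv σ p (Q x) := by
        refine setIntegral_congr_fun measurableSet_ball fun x _ => hkey x
      have himg : ⇑Q '' Metric.ball (0 : Plane) (R i) = Metric.ball (0 : Plane) (R i) := by
        have := Q.toIsometryEquiv.image_ball (0 : Plane) (R i)
        simpa using this
      have hb2 : (∫ x in ⇑Q '' Metric.ball (0 : Plane) (R i), gconv σ p x)
          = ∫ x in Metric.ball (0 : Plane) (R i), gconv σ p (Q x) :=
        hQmp.setIntegral_image_emb hQemb _ _
      rw [hb1, ← hb2, himg, hp1]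
    · intro x hx
      rw [hkey x]
      exact hp2 (Q x) (by rw [Q.norm_map, hx])
  have hqmin : ∀ r ∈ K, ‖q‖ ≤ ‖r‖ := by
    intro r hr
    rw [hqnorm]
    exact hpmin r hr
  have : q = p := by
    rw [huniq q ⟨hqK, hqmin⟩, huniq p ⟨hpK, hpmin⟩]
  filter_upwards [hqcoe, this ▸ Filter.EventuallyEq.refl _ (⇑q)] with y hy1 _
  calc p (Q y) = (⇑p ∘ ⇑Q) y := rfl
    _ = q y := hy1.symm
    _ = p y := by rw [this]

end
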